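/- Define z : [0,1] → ℝ by z(0) = 0 and, for v ∈ (2^{−(k+1)}, 2^{−k}] with k ∈ ℕ, z(v) = 2^{−(k+1)}. Then ∫₀¹ (v − z(v)) dv = 1/6. (This is Observation 2's statement that Zeno's Partition yields ex ante consumer surplus 1/6 for a uniform valuation on [0,1], which exceeds the surplus 1/8 without personalized pricing.) -/

import Mathlib

open MeasureTheory Set

noncomputable def zpA (k : ℕ) : ℝ := (1 / 2 : ℝ) ^ k

lemma zpA_eq (k : ℕ) : (2 : ℝ) ^ (-(k : ℤ)) = zpA k := by
  rw [zpow_neg, zpow_natCast, zpA, one_div, inv_pow]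

lemma zpA_pos (k : ℕ) : 0 < zpA k := pow_pos (by norm_num) k

lemma zpA_anti : ∀ {i j : ℕ}, i ≤ j → zpA j ≤ zpA i := by
  intro i j h
  exact pow_le_pow_of_le_one (by norm_num) (by norm_num) h

lemma zpA_succ (k : ℕ) : zpA (k + 1) = zpA k / 2 := by
  rw [zpA, zpA, pow_succ]; ring

lemma zpA_le_one (k : ℕ) : zpA k ≤ 1 := by
  simpa [zpA] using zpA_anti (Nat.zero_le k)

lemma zpA_succ_lt (k : ℕ) : zpA (k + 1) < zpA k := by
  rw [zpA_succ]; linarith [zpA_pos k]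

/-- uniqueness of the segment -/
lemma zpA_unique {i j : ℕ} {v : ℝ} (hi : v ∈ Ioc (zpA (i+1)) (zpA i))
    (hj : v ∈ Ioc (zpA (j+1)) (zpA j)) : i = j := by
  rcases lt_trichotomy i j with h | h | h
  · exact absurd (lt_of_le_of_lt (hj.2.trans (zpA_anti h)) hi.1) (lt_irrefl v)
  · exact h
  · exact absurd (lt_of_le_of_lt (hi.2.trans (zpA_anti h)) hj.1) (lt_irrefl v)

lemma zpA_exists {v : ℝ} (hv : v ∈ Ioc (0:ℝ) 1) : ∃ k, v ∈ Ioc (zpA (k+1)) (zpA k) := by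
  have hP : ∃ n, zpA n < v := by
    obtain ⟨n, hn⟩ := exists_pow_lt_of_lt_one hv.1 (by norm_num : (1/2 : ℝ) < 1)
    exact ⟨n, hn⟩
  classical
  set m := Nat.find hP with hm
  have hm0 : m ≠ 0 := by
    intro h
    have := Nat.find_spec hP
    rw [← hm, h] at this
    simp [zpA] at this
    linarith [hv.2]
  obtain ⟨k, hk⟩ := Nat.exists_eq_succ_of_ne_zero hm0
  refine ⟨k, ?_, ?_⟩
  · have := Nat.find_spec hP; rw [← hm, hk] at this; exact this
  · have := Nat.find_min hP (by omega : k < m)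
    exact not_lt.mp this

lemma zpA_iUnion : Ioc (0:ℝ) 1 = ⋃ k, Ioc (zpA (k+1)) (zpA k) := by
  ext v
  constructor
  · intro hv; obtain ⟨k, hk⟩ := zpA_exists hv; exact mem_iUnion.mpr ⟨k, hk⟩
  · intro hv
    obtain ⟨k, hk⟩ := mem_iUnion.mp hv
    exact ⟨(zpA_pos (k+1)).trans hk.1, hk.2.trans (zpA_le_one k)⟩

noncomputable def zg : ℝ → ℝ :=
  fun v => ∑' k : ℕ, (Ioc (zpA (k+1)) (zpA k)).indicator (fun x => x - zpA (k+1)) v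

lemma zg_hasSum (v : ℝ) :
    HasSum (fun k : ℕ => (Ioc (zpA (k+1)) (zpA k)).indicator (fun x => x - zpA (k+1)) v) (zg v) := by
  classical
  have hsum : Summable fun k : ℕ => (Ioc (zpA (k+1)) (zpA k)).indicator (fun x => x - zpA (k+1)) v := by
    by_cases h : ∃ k, v ∈ Ioc (zpA (k+1)) (zpA k)
    · obtain ⟨k, hk⟩ := h
      refine (hasSum_single k ?_).summable
      intro j hj
      exact indicator_of_notMem (fun hv => hj (zpA_unique hv hk)) _
    · have : (fun k : ℕ => (Ioc (zpA (k+1)) (zpA k)).indicator (fun x => x - zpA (k+1)) v) = 0 := by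
        funext k
        exact indicator_of_notMem (fun hv => h ⟨k, hv⟩) _
      rw [this]; exact summable_zero
  exact hsum.hasSum

lemma zg_eq {k : ℕ} {v : ℝ} (hv : v ∈ Ioc (zpA (k+1)) (zpA k)) : zg v = v - zpA (k+1) := by
  classical
  have := ((zg_hasSum v).unique (hasSum_single (f := fun k : ℕ =>
    (Ioc (zpA (k+1)) (zpA k)).indicator (fun x => x - zpA (k+1)) v) k
    (fun j hj => indicator_of_notMem (fun hvj => hj (zpA_unique hvj hv)) _)))
  exact this.trans (indicator_of_mem hv _)

lemma zg_measurable : Measurable zg := by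
  apply measurable_of_tendsto_metrizable
    (f := fun n v => ∑ k ∈ Finset.range n, (Ioc (zpA (k+1)) (zpA k)).indicator (fun x => x - zpA (k+1)) v)
  · intro n
    apply Finset.measurable_sum
    intro k _
    exact (measurable_id.sub measurable_const).indicator measurableSet_Ioc
  · rw [tendsto_pi_nhds]
    intro v
    exact (zg_hasSum v).tendsto_sum_nat

/-- Observation 2: Zeno's Partition yields ex ante consumer surplus `1/6` for a
uniform valuation on `[0,1]`. Here `z v` is the price charged to type `v`:
`z 0 = 0`, and `z v = 2^{-(k+1)}` for `v ∈ (2^{-(k+1)}, 2^{-k}]`. -/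
theorem stmt_4 (z : ℝ → ℝ) (hz0 : z 0 = 0)
    (hz : ∀ k : ℕ, ∀ v : ℝ, (2 : ℝ) ^ (-(k + 1 : ℤ)) < v → v ≤ (2 : ℝ) ^ (-(k : ℤ)) →
      z v = (2 : ℝ) ^ (-(k + 1 : ℤ))) :
    ∫ v in (0 : ℝ)..1, (v - z v) = 1 / 6 := by
  have hz' : ∀ k : ℕ, ∀ v ∈ Ioc (zpA (k+1)) (zpA k), z v = zpA (k+1) := by
    intro k v hv
    have h1 : (2 : ℝ) ^ (-(k + 1 : ℤ)) = zpA (k+1) := by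
      rw [show (-(k + 1 : ℤ)) = (-((k+1 : ℕ) : ℤ)) by push_cast; ring, zpA_eq]
    have h2 : (2 : ℝ) ^ (-(k : ℤ)) = zpA k := zpA_eq k
    rw [hz k v (h1 ▸ hv.1) (h2 ▸ hv.2), h1]
  -- f = zg on Ioc 0 1
  have hfg : EqOn (fun v => v - z v) zg (Ioc (0:ℝ) 1) := by
    intro v hv
    obtain ⟨k, hk⟩ := zpA_exists hv
    simp only
    rw [hz' k v hk, zg_eq hk]
  rw [intervalIntegral.integral_of_le (by norm_num : (0:ℝ) ≤ 1)]
  rw [setIntegral_congr_fun measurableSet_Ioc hfg]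
  have hint : IntegrableOn zg (Ioc (0:ℝ) 1) := by
    apply Measure.integrableOn_of_bounded (M := 1) (by simp)
      zg_measurable.aestronglyMeasurable
    rw [ae_restrict_iff' measurableSet_Ioc]
    filter_upwards with v hv
    obtain ⟨k, hk⟩ := zpA_exists hv
    rw [zg_eq hk, Real.norm_eq_abs, abs_of_nonneg (by linarith [hk.1])]
    linarith [zpA_pos (k+1), hk.2, zpA_le_one k]
  rw [zpA_iUnion, integral_iUnion (fun k => measurableSet_Ioc)
    (fun i j hij => ?_) (zpA_iUnion ▸ hint)]
  swap
  · simp only [Function.onFun, Set.Ioc_disjoint_Ioc]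
    rcases Nat.lt_or_ge i j with h | h
    · calc min (zpA i) (zpA j) ≤ zpA j := min_le_right _ _
        _ ≤ zpA (i+1) := zpA_anti h
        _ ≤ max (zpA (i+1)) (zpA (j+1)) := le_max_left _ _
    · have h' : j < i := lt_of_le_of_ne h (Ne.symm hij)
      calc min (zpA i) (zpA j) ≤ zpA i := min_le_left _ _
        _ ≤ zpA (j+1) := zpA_anti h'
        _ ≤ max (zpA (i+1)) (zpA (j+1)) := le_max_right _ _
  have hpiece : ∀ k : ℕ, ∫ v in Ioc (zpA (k+1)) (zpA k), zg v = (1/8) * (1/4)^k := by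
    intro k
    rw [setIntegral_congr_fun measurableSet_Ioc (fun v hv => zg_eq hv)]
    rw [← intervalIntegral.integral_of_le (zpA_succ_lt k).le]
    rw [intervalIntegral.integral_sub intervalIntegral.intervalIntegrable_id
      intervalIntegrable_const]
    rw [integral_id, intervalIntegral.integral_const, zpA_succ, smul_eq_mul]
    have : zpA k ^ 2 = (1/4 : ℝ)^k := by rw [zpA, ← pow_mul, mul_comm, pow_mul]; norm_num
    rw [← this]; ring
  simp_rw [hpiece]
  rw [tsum_mul_left, tsum_geometric_of_lt_one (by norm_num) (by norm_num)]
  norm_num
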